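/- Let A, B, M, M̄ be symmetric positive semidefinite n×n real matrices with A, B positive definite, τ > 0, and set δM = M − M̄. Let (λ, (v,u)) with λ ∈ ℂ, (v,u) ∈ ℂ²ⁿ nonzero be an eigenpair of the generalized problem [[τA, M],[M, −τB]](v,u)ᵀ = λ[[τA, M̄],[M̄, −τB]](v,u)ᵀ. Then |λ − 1|² = 4|Im((δM)v, u)|² / (α² + 4|Im(M̄v, u)|²), where α = τ((Av,v) + (Bu,u)) and (·,·) denotes the sesquilinear pairing (Xv,u) = uᴴXv extended to complex vectors. -/

import Mathlib

open Matrix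

private lemma hermC {n : ℕ} {A : Matrix (Fin n) (Fin n) ℝ} (hA : A.IsHermitian) :
    (A.map ((↑) : ℝ → ℂ)).IsHermitian := by
  ext i j
  simp [Matrix.map_apply, Matrix.conjTranspose_apply, ← hA.apply j i]

private lemma pair_star {n : ℕ} {A : Matrix (Fin n) (Fin n) ℝ} (hA : A.IsHermitian)
    (v u : Fin n → ℂ) :
    star (star u ⬝ᵥ (A.map ((↑) : ℝ → ℂ)).mulVec v)
      = star v ⬝ᵥ (A.map ((↑) : ℝ → ℂ)).mulVec u := by
  rw [star_dotProduct, star_star, star_mulVec, (hermC hA).eq, ← Matrix.dotProduct_mulVec]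

private lemma re_form {n : ℕ} (A : Matrix (Fin n) (Fin n) ℝ) (v : Fin n → ℂ) :
    (star v ⬝ᵥ (A.map ((↑) : ℝ → ℂ)).mulVec v).re
      = (fun i => (v i).re) ⬝ᵥ A *ᵥ (fun i => (v i).re)
        + (fun i => (v i).im) ⬝ᵥ A *ᵥ (fun i => (v i).im) := by
  simp only [dotProduct, mulVec, Matrix.map_apply, Finset.mul_sum, Complex.re_sum,
    Pi.star_apply, Complex.star_def, Complex.mul_re, Complex.conj_re, Complex.conj_im,
    Complex.ofReal_re, Complex.ofReal_im, Complex.mul_im]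
  rw [← Finset.sum_add_distrib]
  refine Finset.sum_congr rfl fun i _ => ?_
  rw [← Finset.sum_add_distrib]
  exact Finset.sum_congr rfl fun j _ => by ring

private lemma re_nonneg {n : ℕ} {A : Matrix (Fin n) (Fin n) ℝ} (hA : A.PosSemidef)
    (v : Fin n → ℂ) : 0 ≤ (star v ⬝ᵥ (A.map ((↑) : ℝ → ℂ)).mulVec v).re := by
  rw [re_form]
  have h1 := hA.dotProduct_mulVec_nonneg (fun i => (v i).re)
  have h2 := hA.dotProduct_mulVec_nonneg (fun i => (v i).im)
  simp only [star_trivial] at h1 h2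
  linarith

private lemma re_pos {n : ℕ} {A : Matrix (Fin n) (Fin n) ℝ} (hA : A.PosDef)
    {v : Fin n → ℂ} (hv : v ≠ 0) : 0 < (star v ⬝ᵥ (A.map ((↑) : ℝ → ℂ)).mulVec v).re := by
  rw [re_form]
  have hxy : (fun i => (v i).re) ≠ 0 ∨ (fun i => (v i).im) ≠ 0 := by
    by_contra h
    push_neg at h
    exact hv (funext fun i => Complex.ext (congrFun h.1 i) (congrFun h.2 i))
  have h1 := hA.posSemidef.dotProduct_mulVec_nonneg (fun i => (v i).re)
  have h2 := hA.posSemidef.dotProduct_mulVec_nonneg (fun i => (v i).im)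
  simp only [star_trivial] at h1 h2
  rcases hxy with hx | hy
  · have := hA.dotProduct_mulVec_pos hx; simp only [star_trivial] at this; linarith
  · have := hA.dotProduct_mulVec_pos hy; simp only [star_trivial] at this; linarith

theorem stmt_8 {n : ℕ} (A B M Mbar : Matrix (Fin n) (Fin n) ℝ)
    (hA : A.PosDef) (hB : B.PosDef)
    (hM : M.PosSemidef) (hMbar : Mbar.PosSemidef)
    (τ : ℝ) (hτ : 0 < τ)
    (lam : ℂ) (v u : Fin n → ℂ) (hvu : Sum.elim v u ≠ 0)
    (heig :
      ((Matrix.fromBlocks (τ • A) M M (-(τ • B))).map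
          ((↑) : ℝ → ℂ)).mulVec (Sum.elim v u)
        = lam • ((Matrix.fromBlocks (τ • A) Mbar Mbar (-(τ • B))).map
            ((↑) : ℝ → ℂ)).mulVec (Sum.elim v u))
    (α : ℝ)
    (hα : α = τ * ((star v ⬝ᵥ (A.map ((↑) : ℝ → ℂ)).mulVec v).re
        + (star u ⬝ᵥ (B.map ((↑) : ℝ → ℂ)).mulVec u).re)) :
    ‖lam - 1‖ ^ 2
      = 4 * ((star u ⬝ᵥ ((M - Mbar).map ((↑) : ℝ → ℂ)).mulVec v).im) ^ 2
        / (α ^ 2 + 4 * ((star u ⬝ᵥ (Mbar.map ((↑) : ℝ → ℂ)).mulVec v).im) ^ 2) := by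
  classical
  set A' := A.map ((↑) : ℝ → ℂ) with hA'def
  set B' := B.map ((↑) : ℝ → ℂ) with hB'def
  set M' := M.map ((↑) : ℝ → ℂ) with hM'def
  set Mb' := Mbar.map ((↑) : ℝ → ℂ) with hMb'def
  have hmap : ∀ X : Matrix (Fin n) (Fin n) ℝ,
      (Matrix.fromBlocks (τ • A) X X (-(τ • B))).map ((↑) : ℝ → ℂ)
        = Matrix.fromBlocks ((τ : ℂ) • A') (X.map ((↑) : ℝ → ℂ))
            (X.map ((↑) : ℝ → ℂ)) (-((τ : ℂ) • B')) := by
    intro X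
    ext (i|i) (j|j) <;>
      simp [Matrix.map_apply, Matrix.fromBlocks, hA'def, hB'def]
  rw [hmap M, hmap Mbar, Matrix.fromBlocks_mulVec, Matrix.fromBlocks_mulVec] at heig
  have h1 : ((τ : ℂ) • A') *ᵥ v + M' *ᵥ u
      = lam • (((τ : ℂ) • A') *ᵥ v + Mb' *ᵥ u) :=
    funext fun i => by simpa using congrFun heig (Sum.inl i)
  have h2 : M' *ᵥ v + (-((τ : ℂ) • B')) *ᵥ u
      = lam • (Mb' *ᵥ v + (-((τ : ℂ) • B')) *ᵥ u) :=
    funext fun i => by simpa using congrFun heig (Sum.inr i)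
  set a := star v ⬝ᵥ A' *ᵥ v with ha_def
  set b := star u ⬝ᵥ B' *ᵥ u with hb_def
  set P := star u ⬝ᵥ M' *ᵥ v with hP_def
  set Q := star u ⬝ᵥ Mb' *ᵥ v with hQ_def
  have E1 : (τ : ℂ) * a + star P = lam * ((τ : ℂ) * a + star Q) := by
    have := congrArg (fun w => star v ⬝ᵥ w) h1
    rw [hP_def, hQ_def, pair_star hM.1 v u, pair_star hMbar.1 v u]
    simpa [dotProduct_add, dotProduct_smul, Matrix.smul_mulVec, smul_eq_mul,
      ha_def, pair_star hM.1 v u, pair_star hMbar.1 v u, mul_add] using this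
  have E2 : P - (τ : ℂ) * b = lam * (Q - (τ : ℂ) * b) := by
    have := congrArg (fun w => star u ⬝ᵥ w) h2
    simpa [dotProduct_add, dotProduct_smul, Matrix.smul_mulVec, smul_eq_mul,
      hb_def, neg_mulVec, dotProduct_neg, mul_add, sub_eq_add_neg, mul_neg] using this
  have ha_re : ((a.re : ℝ) : ℂ) = a :=
    Complex.conj_eq_iff_re.mp (by rw [← Complex.star_def]; exact pair_star hA.1 v v)
  have hb_re : ((b.re : ℝ) : ℂ) = b :=
    Complex.conj_eq_iff_re.mp (by rw [← Complex.star_def]; exact pair_star hB.1 u u)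
  have hsum : (τ : ℂ) * a + (τ : ℂ) * b = (α : ℂ) := by
    rw [← ha_re, ← hb_re, hα]; push_cast; ring
  have hQconj : star Q - Q = -((2 * Q.im : ℝ) * Complex.I) := by
    rw [Complex.star_def, ← Complex.sub_conj]; ring
  have hPconj : star P - P = -((2 * P.im : ℝ) * Complex.I) := by
    rw [Complex.star_def, ← Complex.sub_conj]; ring
  have key : (lam - 1) * ((α : ℂ) - (2 * Q.im : ℝ) * Complex.I)
      = -((2 * (P.im - Q.im) : ℝ) * Complex.I) := by
    have expand : (lam - 1) * (((τ : ℂ) * a + (τ : ℂ) * b) + (star Q - Q))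
        = (star P - P) - (star Q - Q) := by linear_combination E2 - E1
    rw [hsum, hQconj, hPconj] at expand
    push_cast at expand ⊢
    linear_combination expand
  have hDim : (star u ⬝ᵥ ((M - Mbar).map ((↑) : ℝ → ℂ)).mulVec v).im = P.im - Q.im := by
    have hsub : (M - Mbar).map ((↑) : ℝ → ℂ) = M' - Mb' := by
      ext i j; simp [Matrix.map_apply, hM'def, hMb'def]
    rw [hsub, Matrix.sub_mulVec, dotProduct_sub, Complex.sub_im, hP_def, hQ_def]
  -- positivity of the denominator
  have hv_or : v ≠ 0 ∨ u ≠ 0 := by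
    by_contra h
    push_neg at h
    exact hvu (funext fun i => by cases i <;> simp [h.1, h.2]; )
  have hαpos : 0 < α := by
    rw [hα]
    refine mul_pos hτ ?_
    rcases hv_or with hv | hu
    · have h1 := re_pos hA hv
      have h2 := re_nonneg hB.posSemidef u
      rw [← hA'def, ← ha_def] at h1
      rw [← hB'def, ← hb_def] at h2
      linarith
    · have h1 := re_nonneg hA.posSemidef v
      have h2 := re_pos hB hu
      rw [← hA'def, ← ha_def] at h1
      rw [← hB'def, ← hb_def] at h2
      linarith
  have hden : (0:ℝ) < α ^ 2 + 4 * Q.im ^ 2 := by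
    have := pow_pos hαpos 2
    nlinarith [sq_nonneg Q.im]
  have hns := congrArg Complex.normSq key
  rw [Complex.normSq_mul] at hns
  have n1 : Complex.normSq ((α : ℂ) - (2 * Q.im : ℝ) * Complex.I)
      = α ^ 2 + 4 * Q.im ^ 2 := by
    simp [Complex.normSq_apply, Complex.sub_re, Complex.sub_im]
    ring
  have n2 : Complex.normSq (-((2 * (P.im - Q.im) : ℝ) * Complex.I))
      = 4 * (P.im - Q.im) ^ 2 := by
    simp [Complex.normSq_apply]
    ring
  rw [n1, n2] at hns
  rw [hDim, Complex.sq_norm, eq_div_iff (ne_of_gt hden)]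
  linarith [hns]
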